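/- Let n ∈ ℝ² be a nonzero vector with n · (v0 − vc) = 0. If α, β ∈ ℝ satisfy α ((v2 − v0)(v2 − v0)ᵀ) n = β ((v1 − v0)(v1 − v0)ᵀ) n, then α = β = 0. (This is the key mechanism, at the vertex v0, by which continuity of the normal stress component across the interior edge from v0 to vc forces the rank-one tangential stresses from the two adjacent subtriangles to vanish.) -/

import Mathlib

noncomputable section

open Matrix MeasureTheory

abbrev Vec2 : Type := Fin 2 → ℝ

/-- Euclidean dot product on `ℝ²`. -/
def dot2 (a b : Vec2) : ℝ := a 0 * b 0 + a 1 * b 1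

/-- Partial derivative of `f` in the `i`-th coordinate direction. -/
def pd (i : Fin 2) (f : Vec2 → ℝ) (x : Vec2) : ℝ := fderiv ℝ f x (Pi.single i 1)

/-- The matrix `a bᵀ`. -/
def outer (a b : Vec2) : Matrix (Fin 2) (Fin 2) ℝ := fun i j => a i * b j

/-- `sym(a ⊗ b) = (a bᵀ + b aᵀ)/2`. -/
def symOuter (a b : Vec2) : Matrix (Fin 2) (Fin 2) ℝ := (1 / 2 : ℝ) • (outer a b + outer b a)

/-- The Airy operator (rotated Hessian)
`J(f) = [[∂²f/∂x₂², −∂²f/∂x₁∂x₂], [−∂²f/∂x₁∂x₂, ∂²f/∂x₁²]]`. -/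
def airy (f : Vec2 → ℝ) (x : Vec2) : Matrix (Fin 2) (Fin 2) ℝ :=
  !![pd 1 (pd 1 f) x, -(pd 0 (pd 1 f) x); -(pd 0 (pd 1 f) x), pd 0 (pd 0 f) x]

/-- `f` is the evaluation function of a real polynomial in two variables of total degree ≤ m. -/
def IsPolyDeg (m : ℕ) (f : Vec2 → ℝ) : Prop :=
  ∃ P : MvPolynomial (Fin 2) ℝ, P.totalDegree ≤ m ∧ ∀ x, f x = MvPolynomial.eval x P

/-- `f` is the evaluation function of a real polynomial in two variables. -/
def IsPolyFun (f : Vec2 → ℝ) : Prop :=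
  ∃ P : MvPolynomial (Fin 2) ℝ, ∀ x, f x = MvPolynomial.eval x P

/-- `λᵢᴿ = λᵢ − min(λ₀, λ₁, λ₂)`: hat function of vertex `vᵢ` on the barycentric refinement. -/
def lamR (lam : Fin 3 → Vec2 → ℝ) (i : Fin 3) (x : Vec2) : ℝ :=
  lam i x - min (lam 0 x) (min (lam 1 x) (lam 2 x))

/-- `x ∈ Ωⱼ`: the region where `λⱼ` is the strict minimum of the barycentric coordinates. -/
def inReg (lam : Fin 3 → Vec2 → ℝ) (j : Fin 3) (x : Vec2) : Prop :=
  ∀ i : Fin 3, i ≠ j → lam j x < lam i x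

/-- The branch formula of `ψᵢ` on `Ω_{i+2}`. -/
def psiA (lam : Fin 3 → Vec2 → ℝ) (tc : Fin 3 → Vec2) (k : ℕ) (i : Fin 3) (x : Vec2) :
    Matrix (Fin 2) (Fin 2) ℝ :=
  (2 * (lam i x - lam (i + 2) x) ^ k) • symOuter (tc i) (tc (i + 1)) -
    ((k : ℝ) * (lam i x - lam (i + 2) x) ^ (k - 1) * (lam (i + 1) x - lam (i + 2) x)) •
      outer (tc (i + 1)) (tc (i + 1))

/-- The branch formula of `ψᵢ` on `Ω_{i+1}`. -/
def psiB (lam : Fin 3 → Vec2 → ℝ) (tc : Fin 3 → Vec2) (k : ℕ) (i : Fin 3) (x : Vec2) :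
    Matrix (Fin 2) (Fin 2) ℝ :=
  -((2 * (lam i x - lam (i + 1) x) ^ k) • symOuter (tc i) (tc (i + 2))) +
    ((k : ℝ) * (lam i x - lam (i + 1) x) ^ (k - 1) * (lam (i + 2) x - lam (i + 1) x)) •
      outer (tc (i + 2)) (tc (i + 2))

open Classical in
/-- The piecewise enrichment stress `ψᵢ`. -/
def psiFun (lam : Fin 3 → Vec2 → ℝ) (tc : Fin 3 → Vec2) (k : ℕ) (i : Fin 3) (x : Vec2) :
    Matrix (Fin 2) (Fin 2) ℝ :=
  if inReg lam (i + 2) x then psiA lam tc k i x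
  else if inReg lam (i + 1) x then psiB lam tc k i x
  else 0

/-- The `Ωⱼ`-branch polynomial formula of `ψᵢ` (value used on the closed edge `eⱼ`). -/
def psiEdge (lam : Fin 3 → Vec2 → ℝ) (tc : Fin 3 → Vec2) (k : ℕ) (i j : Fin 3) (x : Vec2) :
    Matrix (Fin 2) (Fin 2) ℝ :=
  if j = i + 2 then psiA lam tc k i x
  else if j = i + 1 then psiB lam tc k i x
  else 0

/-- The Airy potential `vᵢ = (4|T|²/(9(k+1))) (λᵢᴿ)^{k+1} (λ_{i+2} − λ_{i+1})`. -/
def vEnrich (lam : Fin 3 → Vec2 → ℝ) (area : ℝ) (k : ℕ) (i : Fin 3) (x : Vec2) : ℝ :=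
  4 * area ^ 2 / (9 * (k + 1)) * (lamR lam i x) ^ (k + 1) * (lam (i + 2) x - lam (i + 1) x)

/-- `v_{i,i+1} = (C_T/(k+1))[(λᵢᴿ)^{k+1} − λᵢ^{k+1}](λ_{i+2} − λ_{i+1}) − C_T λᵢ^k λ_{i+1} λ_{i+2}`. -/
def vE1 (lam : Fin 3 → Vec2 → ℝ) (area : ℝ) (k : ℕ) (i : Fin 3) (x : Vec2) : ℝ :=
  4 * area ^ 2 / 9 / (k + 1) * ((lamR lam i x) ^ (k + 1) - (lam i x) ^ (k + 1)) *
      (lam (i + 2) x - lam (i + 1) x) -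
    4 * area ^ 2 / 9 * (lam i x) ^ k * lam (i + 1) x * lam (i + 2) x

/-- `v_{i,i+2} = (C_T/(k+1))[(λᵢᴿ)^{k+1} − λᵢ^{k+1}](λ_{i+2} − λ_{i+1}) + C_T λᵢ^k λ_{i+1} λ_{i+2}`. -/
def vE2 (lam : Fin 3 → Vec2 → ℝ) (area : ℝ) (k : ℕ) (i : Fin 3) (x : Vec2) : ℝ :=
  4 * area ^ 2 / 9 / (k + 1) * ((lamR lam i x) ^ (k + 1) - (lam i x) ^ (k + 1)) *
      (lam (i + 2) x - lam (i + 1) x) +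
    4 * area ^ 2 / 9 * (lam i x) ^ k * lam (i + 1) x * lam (i + 2) x

/-- `wᵢ = (1/(4 C_T c_{i,i})) (v_{i+1,i} − v_{i+2,i})`, with `k = 1`. -/
def wFun (lam : Fin 3 → Vec2 → ℝ) (g : Fin 3 → Vec2) (n : Fin 3 → Vec2) (area : ℝ)
    (i : Fin 3) (x : Vec2) : ℝ :=
  1 / (4 * (4 * area ^ 2 / 9) * dot2 (g i) (n i)) *
    (vE2 lam area 1 (i + 1) x - vE1 lam area 1 (i + 2) x)

/-- `sᵢ = λ_{i+1} λ_{i+2} (λ_{i+1} − λ_{i+2})`. -/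
def sFun (lam : Fin 3 → Vec2 → ℝ) (i : Fin 3) (x : Vec2) : ℝ :=
  lam (i + 1) x * lam (i + 2) x * (lam (i + 1) x - lam (i + 2) x)

/-- `uᵢ = sᵢ − 3(c_{i+1,i} − c_{i+2,i}) wᵢ − c_{i+1,i+1} w_{i+1} + c_{i+2,i+2} w_{i+2}`. -/
def uFun (lam : Fin 3 → Vec2 → ℝ) (g : Fin 3 → Vec2) (n : Fin 3 → Vec2) (area : ℝ)
    (i : Fin 3) (x : Vec2) : ℝ :=
  sFun lam i x - 3 * (dot2 (g (i + 1)) (n i) - dot2 (g (i + 2)) (n i)) * wFun lam g n area i x -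
    dot2 (g (i + 1)) (n (i + 1)) * wFun lam g n area (i + 1) x +
    dot2 (g (i + 2)) (n (i + 2)) * wFun lam g n area (i + 2) x

/-- The closed triangle `T = conv{v₀, v₁, v₂}`. -/
def Tset (v : Fin 3 → Vec2) : Set Vec2 := convexHull ℝ {v 0, v 1, v 2}

/-- The closed edge `eⱼ` of `T` opposite the vertex `vⱼ`. -/
def edgeSeg (v : Fin 3 → Vec2) (j : Fin 3) : Set Vec2 := segment ℝ (v (j + 1)) (v (j + 2))

/-- `det(v₁ − v₀, v₂ − v₀)`. -/
def detT (v : Fin 3 → Vec2) : ℝ :=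
  (v 1 0 - v 0 0) * (v 2 1 - v 0 1) - (v 1 1 - v 0 1) * (v 2 0 - v 0 0)

/-- for `n ≠ 0` orthogonal to `v₀ − v_c`, if
`α ((v₂−v₀)(v₂−v₀)ᵀ) n = β ((v₁−v₀)(v₁−v₀)ᵀ) n`, then `α = β = 0`. -/
theorem rank_one_tangential_stresses_vanish
    (v : Fin 3 → Vec2) (hv : AffineIndependent ℝ v)
    (vc : Vec2) (hvc : vc = (1 / 3 : ℝ) • (v 0 + v 1 + v 2))
    (nv : Vec2) (hnv : nv ≠ 0) (horth : dot2 nv (v 0 - vc) = 0)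
    (α β : ℝ)
    (h : α • Matrix.mulVec (outer (v 2 - v 0) (v 2 - v 0)) nv
        = β • Matrix.mulVec (outer (v 1 - v 0) (v 1 - v 0)) nv) :
    α = 0 ∧ β = 0 := by
  set a : Vec2 := v 1 - v 0 with ha
  set b : Vec2 := v 2 - v 0 with hb
  have li : LinearIndependent ℝ ![a, b] := by
    have h' := (affineIndependent_iff_linearIndependent_vsub ℝ v 0).mp hv
    have e : Function.Injective (fun j : Fin 2 => (⟨j.succ, by fin_cases j <;> decide⟩ : {i : Fin 3 // i ≠ 0})) := by
      intro x y hxy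
      simpa [Fin.succ_inj] using congrArg (fun x => x.1) hxy
    have := h'.comp _ e
    convert this using 1
    funext j
    fin_cases j <;> rfl
    all_goals rfl
  set c : ℝ := dot2 nv b with hc
  set d : ℝ := dot2 nv a with hd
  have hsum : d + c = 0 := by
    have := horth
    simp only [hvc, dot2, Pi.sub_apply, Pi.smul_apply, Pi.add_apply, smul_eq_mul] at this
    simp only [hd, hc, dot2, ha, hb, Pi.sub_apply]
    linarith
  -- componentwise equations from h
  have hcomp : ∀ j : Fin 2, α * (b j * c) = β * (a j * d) := by
    intro j
    have := congrFun h j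
    simp only [Pi.smul_apply, Matrix.mulVec, dotProduct, Fin.sum_univ_two, outer,
      smul_eq_mul] at this
    simp only [hc, hd, dot2]
    linear_combination this
  by_cases hc0 : c = 0
  · exfalso
    have hd0 : d = 0 := by linarith
    -- nv is orthogonal to a and b, which span ℝ²
    have hcard : Fintype.card (Fin 2) = Module.finrank ℝ Vec2 := by simp
    let B := basisOfLinearIndependentOfCardEqFinrank li hcard
    have hB : ∀ j, B j = ![a, b] j := fun j => by
      simp [B, coe_basisOfLinearIndependentOfCardEqFinrank]
    have hrep := B.sum_repr nv
    rw [Fin.sum_univ_two, hB 0, hB 1] at hrep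
    set r0 := B.repr nv 0
    set r1 := B.repr nv 1
    have hnn : dot2 nv nv = 0 := by
      have hrep' : nv = r0 • a + r1 • b := by
        rw [← hrep]; rfl
      have ea : dot2 nv a = 0 := hd0
      have eb : dot2 nv b = 0 := hc0
      nth_rewrite 2 [hrep']
      simp only [dot2, Pi.add_apply, Pi.smul_apply, smul_eq_mul] at *
      linear_combination r0 * ea + r1 * eb
    have h0 : nv 0 = 0 := by
      simp only [dot2] at hnn; nlinarith
    have h1 : nv 1 = 0 := by
      simp only [dot2] at hnn; nlinarith
    exact hnv (funext fun j => by fin_cases j <;> assumption)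
  · have hdc : d = -c := by linarith
    have hvec : (Finset.univ : Finset (Fin 2)).sum (fun i => (![β, α] : Fin 2 → ℝ) i • ![a, b] i) = 0 := by
      rw [Fin.sum_univ_two]
      funext j
      have e1 := hcomp j
      rw [hdc] at e1
      have hj : (β * a j + α * b j) * c = 0 := by linear_combination e1
      simp only [Pi.add_apply, Pi.smul_apply, Pi.zero_apply, smul_eq_mul,
        Matrix.cons_val_zero, Matrix.cons_val_one, Matrix.head_cons]
      have := (mul_eq_zero.mp hj).resolve_right hc0
      linarith
    have := Fintype.linearIndependent_iff.mp li ![β, α] hvec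
    exact ⟨by simpa using this 1, by simpa using this 0⟩
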